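/- arXiv:2205.08951 — 2 statements merged into one kernel-verified Lean document; each statement's English description precedes it below -/
import Mathlib

section
/- Assume K_M is positive semidefinite. Let F : [0,T] → ℝ^{n×n} be the unique solution of F'(t) = L[F(t)] with symmetric initial value F(0), and let F_H : [0,T] → ℝ^{n×n} be a differentiable symmetric-matrix-valued function with F_H(0) = F(0) and such that L[F_H(t)] − F_H'(t) is positive semidefinite for every t ∈ [0,T]. Then F(t) − F_H(t) is positive semidefinite for every t ∈ [0,T]. -/
open Matrix MeasureTheory Filter
open scoped Kronecker Topology

/-- Column-stacking vectorization of a matrix: `vecM X (j, i) = X i j`. -/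
def vecM {a b : Type*} (X : Matrix a b ℝ) : b × a → ℝ := fun p => X p.2 p.1

/-- Inverse of column-stacking vectorization. -/
def unvecM {a b : Type*} (v : b × a → ℝ) : Matrix a b ℝ := Matrix.of fun i j => v (j, i)

/-- (Mixed) Lyapunov-type operator `X ↦ A₁ X + X A₂ᵀ + ∑ᵢⱼ kᵢⱼ • N₁ᵢ X N₂ⱼᵀ`. -/
def lyapM {a b : Type*} [Fintype a] [Fintype b] {q : ℕ}
    (A₁ : Matrix a a ℝ) (A₂ : Matrix b b ℝ)
    (N₁ : Fin q → Matrix a a ℝ) (N₂ : Fin q → Matrix b b ℝ)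
    (K : Matrix (Fin q) (Fin q) ℝ) (X : Matrix a b ℝ) : Matrix a b ℝ :=
  A₁ * X + X * A₂ᵀ + ∑ i, ∑ j, K i j • (N₁ i * X * (N₂ j)ᵀ)

/-- Frobenius adjoint of `lyapM`: `X ↦ A₁ᵀ X + X A₂ + ∑ᵢⱼ kᵢⱼ • N₁ᵢᵀ X N₂ⱼ`. -/
def lyapAdjM {a b : Type*} [Fintype a] [Fintype b] {q : ℕ}
    (A₁ : Matrix a a ℝ) (A₂ : Matrix b b ℝ)
    (N₁ : Fin q → Matrix a a ℝ) (N₂ : Fin q → Matrix b b ℝ)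
    (K : Matrix (Fin q) (Fin q) ℝ) (X : Matrix a b ℝ) : Matrix a b ℝ :=
  A₁ᵀ * X + X * A₂ + ∑ i, ∑ j, K i j • ((N₁ i)ᵀ * X * N₂ j)

/-- Kronecker matrix `𝒦 = I ⊗ A₁ + A₂ ⊗ I + ∑ᵢⱼ kᵢⱼ • (N₂ᵢ ⊗ N₁ⱼ)` associated to `lyapM`. -/
noncomputable def kronM {a b : Type*} [Fintype a] [Fintype b] [DecidableEq a] [DecidableEq b] {q : ℕ}
    (A₁ : Matrix a a ℝ) (A₂ : Matrix b b ℝ)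
    (N₁ : Fin q → Matrix a a ℝ) (N₂ : Fin q → Matrix b b ℝ)
    (K : Matrix (Fin q) (Fin q) ℝ) : Matrix (b × a) (b × a) ℝ :=
  (1 : Matrix b b ℝ) ⊗ₖ A₁ + A₂ ⊗ₖ (1 : Matrix a a ℝ) + ∑ i, ∑ j, K i j • (N₂ i ⊗ₖ N₁ j)

/-- `F` solves the matrix ODE `F' = L (F t)` at every `t ∈ [0,T]` (entrywise). -/
def solvesODE {a b : Type*} (L : Matrix a b ℝ → Matrix a b ℝ)
    (F : ℝ → Matrix a b ℝ) (T : ℝ) : Prop :=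
  ∀ t ∈ Set.Icc (0:ℝ) T, ∀ i j, HasDerivAt (fun s => F s i j) (L (F t) i j) t

/-- Entrywise integral `∫₀ᵀ F(t) dt`. -/
noncomputable def intM {a b : Type*} (F : ℝ → Matrix a b ℝ) (T : ℝ) : Matrix a b ℝ :=
  Matrix.of fun i j => ∫ t in (0:ℝ)..T, F t i j

/-- Explicit solution of a vectorized linear matrix ODE via the matrix exponential. -/
noncomputable def expSolM {a b : Type*} [Fintype a] [Fintype b] [DecidableEq a] [DecidableEq b]
    (Kmat : Matrix (b × a) (b × a) ℝ) (F₀ : Matrix a b ℝ) (t : ℝ) : Matrix a b ℝ :=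
  unvecM (NormedSpace.exp (t • Kmat) *ᵥ vecM F₀)

lemma sum_dotProduct' {m : ℕ} {ι : Type*} (s : Finset ι) (f : ι → Fin m → ℝ) (x : Fin m → ℝ) :
    (∑ i ∈ s, f i) ⬝ᵥ x = ∑ i ∈ s, f i ⬝ᵥ x :=
  map_sum (AddMonoidHom.mk' (fun v : Fin m → ℝ => v ⬝ᵥ x) (fun a b => add_dotProduct a b x)) f s


lemma dotProduct_sum' {m : ℕ} {ι : Type*} (s : Finset ι) (x : Fin m → ℝ) (f : ι → Fin m → ℝ) :
    x ⬝ᵥ (∑ i ∈ s, f i) = ∑ i ∈ s, x ⬝ᵥ f i :=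
  map_sum (AddMonoidHom.mk' (fun v : Fin m → ℝ => x ⬝ᵥ v) (fun a b => dotProduct_add x a b)) f s


lemma mulVec_sum' {n m : ℕ} {ι : Type*} (s : Finset ι) (M : Matrix (Fin n) (Fin m) ℝ)
    (f : ι → Fin m → ℝ) : M *ᵥ (∑ i ∈ s, f i) = ∑ i ∈ s, M *ᵥ f i :=
  map_sum (AddMonoidHom.mk' (fun v : Fin m → ℝ => M *ᵥ v) (fun a b => mulVec_add M a b)) f s


lemma tensor_nonneg {q n : ℕ} {K : Matrix (Fin q) (Fin q) ℝ} (hK : K.PosSemidef)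
    {M : Matrix (Fin n) (Fin n) ℝ} (hM : ∀ y : Fin n → ℝ, 0 ≤ y ⬝ᵥ (M *ᵥ y))
    (u : Fin q → Fin n → ℝ) :
    0 ≤ ∑ i, ∑ j, K i j * (u i ⬝ᵥ (M *ᵥ u j)) := by
  obtain ⟨r, B, hB⟩ := Matrix.posSemidef_iff_eq_sum_vecMulVec.mp hK
  have hKij : ∀ i j, K i j = ∑ m, B m i * B m j := by
    intro i j; rw [hB]; simp [Matrix.sum_apply, vecMulVec_apply]
  have key : ∀ m, (∑ i, B m i • u i) ⬝ᵥ (M *ᵥ (∑ j, B m j • u j))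
      = ∑ i, ∑ j, B m i * B m j * (u i ⬝ᵥ (M *ᵥ u j)) := by
    intro m
    rw [sum_dotProduct']
    refine Finset.sum_congr rfl fun i _ => ?_
    rw [smul_dotProduct, mulVec_sum' Finset.univ M, dotProduct_sum']
    rw [Finset.smul_sum]
    refine Finset.sum_congr rfl fun j _ => ?_
    rw [mulVec_smul, dotProduct_smul, smul_eq_mul, smul_eq_mul]
    ring
  calc ∑ i, ∑ j, K i j * (u i ⬝ᵥ (M *ᵥ u j))
      = ∑ i, ∑ j, ∑ m, B m i * B m j * (u i ⬝ᵥ (M *ᵥ u j)) := by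
        refine Finset.sum_congr rfl fun i _ => Finset.sum_congr rfl fun j _ => ?_
        rw [hKij, Finset.sum_mul]
    _ = ∑ m, ∑ i, ∑ j, B m i * B m j * (u i ⬝ᵥ (M *ᵥ u j)) := by
        rw [Finset.sum_congr rfl fun (i : Fin q) (_ : i ∈ Finset.univ) =>
          (Finset.sum_comm : ∑ j, ∑ m, B m i * B m j * (u i ⬝ᵥ (M *ᵥ u j)) = _)]
        exact Finset.sum_comm
    _ ≥ 0 := by
        refine Finset.sum_nonneg fun m _ => ?_
        rw [← key]
        exact hM _
lemma sum_mulVec' {n m : ℕ} {ι : Type*} (s : Finset ι) (f : ι → Matrix (Fin n) (Fin m) ℝ)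
    (x : Fin m → ℝ) : (∑ i ∈ s, f i) *ᵥ x = ∑ i ∈ s, f i *ᵥ x :=
  map_sum (AddMonoidHom.mk' (fun M : Matrix (Fin n) (Fin m) ℝ => M *ᵥ x)
    (fun A B => add_mulVec A B x)) f s

lemma lyapM_sub {n q : ℕ} (A : Matrix (Fin n) (Fin n) ℝ) (N : Fin q → Matrix (Fin n) (Fin n) ℝ)
    (K : Matrix (Fin q) (Fin q) ℝ) (X Y : Matrix (Fin n) (Fin n) ℝ) :
    lyapM A A N N K (X - Y) = lyapM A A N N K X - lyapM A A N N K Y := by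
  simp only [lyapM, Matrix.mul_sub, Matrix.sub_mul, smul_sub, Finset.sum_sub_distrib]
  abel


lemma lyapM_add {n q : ℕ} (A : Matrix (Fin n) (Fin n) ℝ) (N : Fin q → Matrix (Fin n) (Fin n) ℝ)
    (K : Matrix (Fin q) (Fin q) ℝ) (X Y : Matrix (Fin n) (Fin n) ℝ) :
    lyapM A A N N K (X + Y) = lyapM A A N N K X + lyapM A A N N K Y := by
  simp only [lyapM, Matrix.mul_add, Matrix.add_mul, smul_add, Finset.sum_add_distrib]
  abel


lemma lyapM_smul {n q : ℕ} (A : Matrix (Fin n) (Fin n) ℝ) (N : Fin q → Matrix (Fin n) (Fin n) ℝ)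
    (K : Matrix (Fin q) (Fin q) ℝ) (r : ℝ) (X : Matrix (Fin n) (Fin n) ℝ) :
    lyapM A A N N K (r • X) = r • lyapM A A N N K X := by
  simp only [lyapM, Matrix.mul_smul, Matrix.smul_mul, smul_add, Finset.smul_sum, smul_comm r]


lemma lyapM_transpose {n q : ℕ} (A : Matrix (Fin n) (Fin n) ℝ)
    (N : Fin q → Matrix (Fin n) (Fin n) ℝ)
    (K : Matrix (Fin q) (Fin q) ℝ) (hK : K.IsSymm) (X : Matrix (Fin n) (Fin n) ℝ) :
    (lyapM A A N N K X)ᵀ = lyapM A A N N K Xᵀ := by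
  have hs : ∀ i j : Fin q, K j i = K i j := fun i j => by
    exact hK.apply i j
  simp only [lyapM, Matrix.transpose_add, Matrix.transpose_mul, Matrix.transpose_smul,
    Matrix.transpose_sum, Matrix.transpose_transpose]
  rw [Finset.sum_comm]
  congr 1
  · abel
  · refine Finset.sum_congr rfl fun i _ => Finset.sum_congr rfl fun j _ => ?_
    rw [hs i j, Matrix.mul_assoc]


lemma hasDerivAt_qf {n : ℕ} (x : Fin n → ℝ) (Mf : ℝ → Matrix (Fin n) (Fin n) ℝ)
    (M' : Matrix (Fin n) (Fin n) ℝ) (t : ℝ)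
    (h : ∀ i j, HasDerivAt (fun s => Mf s i j) (M' i j) t) :
    HasDerivAt (fun s => x ⬝ᵥ (Mf s *ᵥ x)) (x ⬝ᵥ (M' *ᵥ x)) t := by
  simp only [dotProduct, mulVec]
  exact HasDerivAt.fun_sum fun i _ => ((HasDerivAt.fun_sum fun j _ =>
    ((h i j).mul_const (x j))).const_mul (x i))


lemma quad_abs_le {n : ℕ} (M : Matrix (Fin n) (Fin n) ℝ) (x : Fin n → ℝ)
    (hx : ∀ i, |x i| ≤ 1) : |x ⬝ᵥ (M *ᵥ x)| ≤ ∑ i, ∑ j, |M i j| := by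
  simp only [dotProduct, mulVec]
  calc |∑ i, x i * ∑ j, M i j * x j| ≤ ∑ i, |x i * ∑ j, M i j * x j| :=
        Finset.abs_sum_le_sum_abs _ _
    _ ≤ ∑ i, ∑ j, |M i j| := by
        refine Finset.sum_le_sum fun i _ => ?_
        rw [abs_mul]
        calc |x i| * |∑ j, M i j * x j| ≤ 1 * ∑ j, |M i j| := by
              refine mul_le_mul (hx i) ?_ (abs_nonneg _) zero_le_one
              calc |∑ j, M i j * x j| ≤ ∑ j, |M i j * x j| := Finset.abs_sum_le_sum_abs _ _
                _ ≤ ∑ j, |M i j| := by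
                    refine Finset.sum_le_sum fun j _ => ?_
                    rw [abs_mul]
                    exact mul_le_of_le_one_right (abs_nonneg _) (hx j)
          _ = ∑ j, |M i j| := one_mul _


lemma abs_le_one_of_unit {n : ℕ} (x : Fin n → ℝ) (hx : x ⬝ᵥ x = 1) (i : Fin n) : |x i| ≤ 1 := by
  have h1 : x i * x i ≤ 1 := by
    rw [← hx]
    simp only [dotProduct]
    exact Finset.single_le_sum (f := fun j => x j * x j) (fun j _ => mul_self_nonneg _)
      (Finset.mem_univ i)
  nlinarith [abs_nonneg (x i), sq_abs (x i)]
lemma star_pi_real {n : ℕ} (x : Fin n → ℝ) : star x = x := by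
  funext i; simp


lemma crossing {n q : ℕ} (T : ℝ) (hT : 0 < T)
    (A : Matrix (Fin n) (Fin n) ℝ) (N : Fin q → Matrix (Fin n) (Fin n) ℝ)
    (K : Matrix (Fin q) (Fin q) ℝ) (hK : K.PosSemidef)
    (G C : ℝ → Matrix (Fin n) (Fin n) ℝ)
    (hGsymm : ∀ t ∈ Set.Icc (0:ℝ) T, (G t).IsSymm)
    (hG0 : G 0 = 0)
    (hGderiv : ∀ t ∈ Set.Icc (0:ℝ) T, ∀ i j,
      HasDerivAt (fun s => G s i j) ((lyapM A A N N K (G t) + C t) i j) t)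
    (hC : ∀ t ∈ Set.Icc (0:ℝ) T, (C t).PosSemidef)
    (ε : ℝ) (hε : 0 < ε) :
    ∀ t ∈ Set.Icc (0:ℝ) T, ∀ x : Fin n → ℝ, x ⬝ᵥ x = 1 →
      0 < x ⬝ᵥ (G t *ᵥ x) +
        ε * Real.exp ((2 * (∑ i, ∑ j, |A i j|) +
          (∑ i, ∑ j, |(∑ i', ∑ j', K i' j' • (N i' * (N j')ᵀ)) i j|) + 1) * t) := by
  set P : Matrix (Fin n) (Fin n) ℝ := ∑ i', ∑ j', K i' j' • (N i' * (N j')ᵀ) with hP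
  set cA : ℝ := ∑ i, ∑ j, |A i j| with hcA
  set cP : ℝ := ∑ i, ∑ j, |P i j| with hcP
  set c : ℝ := 2 * cA + cP + 1 with hc
  have hcA0 : 0 ≤ cA := Finset.sum_nonneg fun i _ => Finset.sum_nonneg fun j _ => abs_nonneg _
  have hcP0 : 0 ≤ cP := Finset.sum_nonneg fun i _ => Finset.sum_nonneg fun j _ => abs_nonneg _
  set φ : (Fin n → ℝ) → ℝ → ℝ := fun x t => x ⬝ᵥ (G t *ᵥ x) + ε * Real.exp (c * t) with hφ
  -- derivative of φ x at any t ∈ Icc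
  have hφd : ∀ x : Fin n → ℝ, ∀ t ∈ Set.Icc (0:ℝ) T,
      HasDerivAt (φ x) (x ⬝ᵥ ((lyapM A A N N K (G t) + C t) *ᵥ x)
        + ε * (Real.exp (c * t) * c)) t := by
    intro x t ht
    have h1 : HasDerivAt (fun s : ℝ => c * s) c t := by
      simpa using (hasDerivAt_id t).const_mul c
    have hexp : HasDerivAt (fun s => Real.exp (c * s)) (Real.exp (c * t) * c) t :=
      (Real.hasDerivAt_exp (c * t)).comp t h1
    exact (hasDerivAt_qf x G _ t (hGderiv t ht)).add (hexp.const_mul ε)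
  intro t₁ ht₁ x₁ hx₁
  by_contra hcon
  push_neg at hcon
  -- the bad set
  set KK : Set ((Fin n → ℝ) × ℝ) :=
    {p | p.1 ⬝ᵥ p.1 = 1 ∧ p.2 ∈ Set.Icc (0:ℝ) T ∧ φ p.1 p.2 ≤ 0} with hKK
  have hKKne : KK.Nonempty := ⟨(x₁, t₁), hx₁, ht₁, hcon⟩
  have hφcont : ContinuousOn (fun p : (Fin n → ℝ) × ℝ => φ p.1 p.2)
      ((Set.univ : Set (Fin n → ℝ)) ×ˢ Set.Icc (0:ℝ) T) := by
    apply ContinuousOn.add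
    · simp only [dotProduct, mulVec]
      apply continuousOn_finset_sum
      intro i _
      apply ContinuousOn.mul (((continuous_apply i).comp continuous_fst).continuousOn)
      apply continuousOn_finset_sum
      intro j _
      apply ContinuousOn.mul
      · exact ContinuousOn.comp (fun s hs => (hGderiv s hs i j).continuousAt.continuousWithinAt)
          continuous_snd.continuousOn (fun p hp => hp.2)
      · exact ((continuous_apply j).comp continuous_fst).continuousOn
    · exact (continuous_const.mul
        (Real.continuous_exp.comp (continuous_const.mul continuous_snd))).continuousOn
  have hKKclosed : IsClosed KK := by
    have h1 : IsClosed {p : (Fin n → ℝ) × ℝ | p.1 ⬝ᵥ p.1 = 1} := by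
      have : Continuous fun p : (Fin n → ℝ) × ℝ => p.1 ⬝ᵥ p.1 := by
        simp only [dotProduct]
        exact continuous_finset_sum _ fun i _ =>
          ((continuous_apply i).comp continuous_fst).mul
            ((continuous_apply i).comp continuous_fst)
      exact isClosed_eq this continuous_const
    have h2 : IsClosed ((Set.univ ×ˢ Set.Icc (0:ℝ) T) ∩
        (fun p : (Fin n → ℝ) × ℝ => φ p.1 p.2) ⁻¹' Set.Iic 0) :=
      hφcont.preimage_isClosed_of_isClosed (isClosed_univ.prod isClosed_Icc) isClosed_Iic
    have : KK = {p : (Fin n → ℝ) × ℝ | p.1 ⬝ᵥ p.1 = 1} ∩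
        ((Set.univ ×ˢ Set.Icc (0:ℝ) T) ∩
          (fun p : (Fin n → ℝ) × ℝ => φ p.1 p.2) ⁻¹' Set.Iic 0) := by
      ext p
      simp only [hKK, Set.mem_setOf_eq, Set.mem_inter_iff, Set.mem_prod, Set.mem_univ,
        Set.mem_preimage, Set.mem_Iic, true_and]
    rw [this]
    exact h1.inter h2
  have hKKsub : KK ⊆ Metric.closedBall (0 : Fin n → ℝ) 1 ×ˢ Set.Icc (0:ℝ) T := by
    rintro ⟨x, t⟩ ⟨hx, ht, _⟩
    refine ⟨?_, ht⟩
    simp only [Metric.mem_closedBall, dist_zero_right]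
    refine (pi_norm_le_iff_of_nonneg zero_le_one).2 fun i => ?_
    rw [Real.norm_eq_abs]
    exact abs_le_one_of_unit x hx i
  have hKKcpt : IsCompact KK :=
    ((isCompact_closedBall _ _).prod isCompact_Icc).of_isClosed_subset hKKclosed hKKsub
  set S : Set ℝ := Prod.snd '' KK with hS
  have hSne : S.Nonempty := hKKne.image _
  have hScpt : IsCompact S := hKKcpt.image continuous_snd
  set t₀ : ℝ := sInf S with ht₀
  have ht₀S : t₀ ∈ S := hScpt.sInf_mem hSne
  obtain ⟨⟨x, t₀'⟩, ⟨hx1', hIcc', hφle'⟩, ht₀eq⟩ := ht₀S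
  have ht₀eq' : t₀' = t₀ := ht₀eq
  have hx1 : x ⬝ᵥ x = 1 := hx1'
  have ht₀Icc : t₀ ∈ Set.Icc (0:ℝ) T := ht₀eq' ▸ hIcc'
  have hx2' : φ x t₀ ≤ 0 := ht₀eq' ▸ hφle'
  -- t₀ > 0
  have ht₀pos : 0 < t₀ := by
    rcases lt_or_eq_of_le ht₀Icc.1 with h | h
    · exact h
    · exfalso
      have : φ x 0 = ε := by
        simp [hφ, hG0, mul_zero, Real.exp_zero]
      rw [← h] at hx2'
      rw [this] at hx2'
      linarith
  -- positivity before t₀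
  have hpos : ∀ s ∈ Set.Ico (0:ℝ) t₀, ∀ y : Fin n → ℝ, y ⬝ᵥ y = 1 → 0 < φ y s := by
    intro s hs y hy
    by_contra hcon2
    push_neg at hcon2
    have hsS : s ∈ S := ⟨(y, s), ⟨hy, ⟨hs.1, (hs.2.trans_le ht₀Icc.2).le⟩, hcon2⟩, rfl⟩
    exact absurd (csInf_le hScpt.bddBelow hsS) (not_le.2 hs.2)
  -- setup at the crossing time
  set δ : ℝ := ε * Real.exp (c * t₀) with hδ
  have hδpos : 0 < δ := mul_pos hε (Real.exp_pos _)
  set M : Matrix (Fin n) (Fin n) ℝ := G t₀ + δ • (1 : Matrix (Fin n) (Fin n) ℝ) with hM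
  have hquadM : ∀ y : Fin n → ℝ, y ⬝ᵥ (M *ᵥ y) = y ⬝ᵥ (G t₀ *ᵥ y) + δ * (y ⬝ᵥ y) := by
    intro y
    rw [hM, add_mulVec, smul_mulVec, one_mulVec, dotProduct_add, dotProduct_smul,
      smul_eq_mul]
  have hsymG : (G t₀)ᵀ = G t₀ := hGsymm t₀ ht₀Icc
  have hMsymm : M.IsSymm := by
    rw [Matrix.IsSymm, hM, transpose_add, transpose_smul, transpose_one, hsymG]
  have hMherm : M.IsHermitian := by
    rw [Matrix.IsHermitian, conjTranspose_eq_transpose_of_trivial]; exact hMsymm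
  have hMquad : ∀ y : Fin n → ℝ, 0 ≤ y ⬝ᵥ (M *ᵥ y) := by
    intro y
    rcases eq_or_ne y 0 with rfl | hy
    · simp
    · have hyy : 0 < y ⬝ᵥ y := by
        obtain ⟨i, hi⟩ := Function.ne_iff.mp hy
        have hii : (0:ℝ) < y i * y i := mul_self_pos.2 (by simpa using hi)
        exact Finset.sum_pos' (fun j _ => mul_self_nonneg _) ⟨i, Finset.mem_univ i, hii⟩
      set r : ℝ := Real.sqrt (y ⬝ᵥ y) with hr
      have hr0 : 0 < r := Real.sqrt_pos.2 hyy
      have hr2 : r * r = y ⬝ᵥ y := Real.mul_self_sqrt hyy.le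
      set z : Fin n → ℝ := r⁻¹ • y with hz
      have hz1 : z ⬝ᵥ z = 1 := by
        rw [hz, smul_dotProduct, dotProduct_smul, smul_eq_mul, smul_eq_mul, ← hr2]
        field_simp
      have hzcont : ContinuousAt (φ z) t₀ := (hφd z t₀ ht₀Icc).continuousAt
      have hev : ∀ᶠ s in nhdsWithin t₀ (Set.Iio t₀), 0 ≤ φ z s := by
        have h1 : ∀ᶠ s in nhdsWithin t₀ (Set.Iio t₀), s ∈ Set.Iio t₀ := self_mem_nhdsWithin
        have h2 : ∀ᶠ s in nhdsWithin t₀ (Set.Iio t₀), s ∈ Set.Ioi (0:ℝ) :=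
          eventually_nhdsWithin_of_eventually_nhds (isOpen_Ioi.eventually_mem ht₀pos)
        filter_upwards [h1, h2] with s hs1 hs2
        exact (hpos s ⟨le_of_lt hs2, hs1⟩ z hz1).le
      have htend : Filter.Tendsto (φ z) (nhdsWithin t₀ (Set.Iio t₀)) (nhds (φ z t₀)) :=
        hzcont.continuousWithinAt
      have hφz : 0 ≤ φ z t₀ := ge_of_tendsto htend hev
      have hyz : y = r • z := by rw [hz, smul_smul, mul_inv_cancel₀ hr0.ne', one_smul]
      have hqy : y ⬝ᵥ (M *ᵥ y) = (r * r) * (z ⬝ᵥ (M *ᵥ z)) := by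
        conv_lhs => rw [hyz]
        rw [smul_dotProduct, mulVec_smul, dotProduct_smul, smul_eq_mul, smul_eq_mul]
        ring
      have hqz : z ⬝ᵥ (M *ᵥ z) = φ z t₀ := by
        rw [hquadM, hz1, mul_one]
      rw [hqy, hqz]
      exact mul_nonneg (mul_self_nonneg r) hφz
  have hMpsd : M.PosSemidef := .of_dotProduct_mulVec_nonneg hMherm fun y => by rw [star_pi_real]; exact hMquad y
  have hφxM : φ x t₀ = x ⬝ᵥ (M *ᵥ x) := by
    have hq := hquadM x
    rw [hx1, mul_one] at hq
    simp only [hφ]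
    rw [hq, ← hδ]
  have hx0 : x ⬝ᵥ (M *ᵥ x) = 0 := le_antisymm (hφxM ▸ hx2') (hMquad x)
  have hMx : M *ᵥ x = 0 :=
    (hMpsd.dotProduct_mulVec_zero_iff x).1 (by rw [star_pi_real]; exact hx0)
  have hGx : G t₀ *ᵥ x = -(δ • x) := by
    have h5 := hMx
    rw [hM, add_mulVec, smul_mulVec, one_mulVec] at h5
    exact eq_neg_of_add_eq_zero_left h5
  -- various quadratic-form identities
  set u : Fin q → Fin n → ℝ := fun k => (N k)ᵀ *ᵥ x with hu
  have hterm1 : x ⬝ᵥ ((A * G t₀) *ᵥ x) = -(δ * (x ⬝ᵥ (A *ᵥ x))) := by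
    rw [← mulVec_mulVec, hGx, mulVec_neg, dotProduct_neg, mulVec_smul, dotProduct_smul,
      smul_eq_mul]
  have hterm2 : x ⬝ᵥ ((G t₀ * Aᵀ) *ᵥ x) = -(δ * (x ⬝ᵥ (A *ᵥ x))) := by
    rw [← mulVec_mulVec, dotProduct_mulVec x (G t₀)]
    have h3 : x ᵥ* G t₀ = -(δ • x) := by rw [← hsymG, vecMul_transpose, hGx]
    have h4 : x ⬝ᵥ (Aᵀ *ᵥ x) = x ⬝ᵥ (A *ᵥ x) := by
      rw [dotProduct_mulVec, vecMul_transpose, dotProduct_comm]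
    rw [h3, neg_dotProduct, smul_dotProduct, smul_eq_mul, h4]
  have hterm3 : ∀ i' j', x ⬝ᵥ ((N i' * G t₀ * (N j')ᵀ) *ᵥ x) = u i' ⬝ᵥ (G t₀ *ᵥ u j') := by
    intro i' j'
    rw [← mulVec_mulVec, ← mulVec_mulVec, dotProduct_mulVec]
    congr 1
    rw [← transpose_transpose (N i'), vecMul_transpose]
  have hPquad : x ⬝ᵥ (P *ᵥ x) = ∑ i', ∑ j', K i' j' * (u i' ⬝ᵥ u j') := by
    rw [hP, sum_mulVec', dotProduct_sum']
    refine Finset.sum_congr rfl fun i' _ => ?_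
    rw [sum_mulVec', dotProduct_sum']
    refine Finset.sum_congr rfl fun j' _ => ?_
    rw [smul_mulVec, dotProduct_smul, smul_eq_mul]
    congr 1
    rw [← mulVec_mulVec, dotProduct_mulVec]
    congr 1
    rw [← transpose_transpose (N i'), vecMul_transpose]
  have hGu : ∀ j', G t₀ *ᵥ u j' = M *ᵥ u j' - δ • u j' := by
    intro j'
    rw [hM, add_mulVec, smul_mulVec, one_mulVec]
    exact (add_sub_cancel_right _ _).symm
  have hsum : x ⬝ᵥ ((∑ i', ∑ j', K i' j' • (N i' * G t₀ * (N j')ᵀ)) *ᵥ x)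
      = (∑ i', ∑ j', K i' j' * (u i' ⬝ᵥ (M *ᵥ u j'))) - δ * (x ⬝ᵥ (P *ᵥ x)) := by
    rw [sum_mulVec', dotProduct_sum', hPquad, Finset.mul_sum, ← Finset.sum_sub_distrib]
    refine Finset.sum_congr rfl fun i' _ => ?_
    rw [sum_mulVec', dotProduct_sum', Finset.mul_sum, ← Finset.sum_sub_distrib]
    refine Finset.sum_congr rfl fun j' _ => ?_
    rw [smul_mulVec, dotProduct_smul, smul_eq_mul, hterm3, hGu, dotProduct_sub,
      dotProduct_smul, smul_eq_mul]
    ring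
  have hS1 : 0 ≤ ∑ i', ∑ j', K i' j' * (u i' ⬝ᵥ (M *ᵥ u j')) := tensor_nonneg hK hMquad u
  have hbA : |x ⬝ᵥ (A *ᵥ x)| ≤ cA := quad_abs_le A x (abs_le_one_of_unit x hx1)
  have hbP : |x ⬝ᵥ (P *ᵥ x)| ≤ cP := quad_abs_le P x (abs_le_one_of_unit x hx1)
  have hCx : 0 ≤ x ⬝ᵥ (C t₀ *ᵥ x) := by
    have h6 := (hC t₀ ht₀Icc).dotProduct_mulVec_nonneg x
    rwa [star_pi_real] at h6
  have hLsplit : x ⬝ᵥ ((lyapM A A N N K (G t₀) + C t₀) *ᵥ x)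
      = x ⬝ᵥ ((A * G t₀) *ᵥ x) + x ⬝ᵥ ((G t₀ * Aᵀ) *ᵥ x)
        + x ⬝ᵥ ((∑ i', ∑ j', K i' j' • (N i' * G t₀ * (N j')ᵀ)) *ᵥ x)
        + x ⬝ᵥ (C t₀ *ᵥ x) := by
    simp only [lyapM]
    rw [add_mulVec, add_mulVec, add_mulVec, dotProduct_add, dotProduct_add, dotProduct_add]
  have hdpos : 0 < x ⬝ᵥ ((lyapM A A N N K (G t₀) + C t₀) *ᵥ x)
      + ε * (Real.exp (c * t₀) * c) := by
    have hεc : ε * (Real.exp (c * t₀) * c) = δ * c := by rw [hδ]; ring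
    rw [hLsplit, hterm1, hterm2, hsum, hεc, hc]
    obtain ⟨hbA1, hbA2⟩ := abs_le.1 hbA
    obtain ⟨hbP1, hbP2⟩ := abs_le.1 hbP
    have h7 : δ * (x ⬝ᵥ (A *ᵥ x)) ≤ δ * cA := mul_le_mul_of_nonneg_left hbA2 hδpos.le
    have h8 : δ * (x ⬝ᵥ (P *ᵥ x)) ≤ δ * cP := mul_le_mul_of_nonneg_left hbP2 hδpos.le
    linarith [h7, h8, hδpos, hS1, hCx]
  -- slope contradiction
  have hd := hφd x t₀ ht₀Icc
  have hdW := hd.hasDerivWithinAt (s := Set.Iio t₀)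
  rw [hasDerivWithinAt_iff_tendsto_slope] at hdW
  have hdiff : Set.Iio t₀ \ {t₀} = Set.Iio t₀ := Set.diff_singleton_eq_self (by simp)
  rw [hdiff] at hdW
  have hevslope : ∀ᶠ s in nhdsWithin t₀ (Set.Iio t₀), slope (φ x) t₀ s ≤ 0 := by
    have h1 : ∀ᶠ s in nhdsWithin t₀ (Set.Iio t₀), s ∈ Set.Iio t₀ := self_mem_nhdsWithin
    have h2 : ∀ᶠ s in nhdsWithin t₀ (Set.Iio t₀), s ∈ Set.Ioi (0:ℝ) :=
      eventually_nhdsWithin_of_eventually_nhds (isOpen_Ioi.eventually_mem ht₀pos)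
    filter_upwards [h1, h2] with s hs1 hs2
    have hφs : 0 < φ x s := hpos s ⟨hs2.le, hs1⟩ x hx1
    rw [slope_def_field]
    apply div_nonpos_of_nonneg_of_nonpos
    · linarith
    · have : s < t₀ := hs1
      linarith
  have hfin : x ⬝ᵥ ((lyapM A A N N K (G t₀) + C t₀) *ᵥ x)
      + ε * (Real.exp (c * t₀) * c) ≤ 0 := le_of_tendsto hdW hevslope
  linarith
lemma solvesODE_symm {n q : ℕ} {T : ℝ} (hT : 0 < T) (A : Matrix (Fin n) (Fin n) ℝ)
    (N : Fin q → Matrix (Fin n) (Fin n) ℝ) (K : Matrix (Fin q) (Fin q) ℝ) (hK : K.IsSymm)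
    (F : ℝ → Matrix (Fin n) (Fin n) ℝ) (hF : solvesODE (lyapM A A N N K) F T)
    (hF0 : (F 0).IsSymm) : ∀ t ∈ Set.Icc (0:ℝ) T, (F t).IsSymm := by
  set E := (Fin n × Fin n) → ℝ with hE
  let ℓ : E →ₗ[ℝ] E :=
    { toFun := fun y => fun p => lyapM A A N N K (Matrix.of fun i j => y (i, j)) p.1 p.2
      map_add' := by
        intro y z
        funext p
        have : (Matrix.of fun i j => (y + z) (i, j)) =
            (Matrix.of fun i j => y (i, j)) + (Matrix.of fun i j => z (i, j)) := by
          ext i j; rfl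
        show lyapM A A N N K (Matrix.of fun i j => (y + z) (i, j)) p.1 p.2 = _
        rw [this, lyapM_add]
        rfl
      map_smul' := by
        intro r y
        funext p
        have : (Matrix.of fun i j => (r • y) (i, j)) =
            r • (Matrix.of fun i j => y (i, j)) := by
          ext i j; rfl
        show lyapM A A N N K (Matrix.of fun i j => (r • y) (i, j)) p.1 p.2 = _
        rw [this, lyapM_smul]
        rfl }
  let L' := LinearMap.toContinuousLinearMap ℓ
  have hv : ∀ t : ℝ, LipschitzWith ‖L'‖₊ (fun y : E => ℓ y) := fun _ => L'.lipschitz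
  set f : ℝ → E := fun t p => F t p.1 p.2 - F t p.2 p.1 with hf_def
  have hfd : ∀ t ∈ Set.Icc (0:ℝ) T, HasDerivAt f (fun p : Fin n × Fin n =>
      lyapM A A N N K (F t) p.1 p.2 - lyapM A A N N K (F t) p.2 p.1) t := by
    intro t ht
    exact hasDerivAt_pi.2 fun p => (hF t ht p.1 p.2).sub (hF t ht p.2 p.1)
  have hveq : ∀ t ∈ Set.Icc (0:ℝ) T, ℓ (f t) = (fun p : Fin n × Fin n =>
      lyapM A A N N K (F t) p.1 p.2 - lyapM A A N N K (F t) p.2 p.1) := by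
    intro t _
    funext p
    show lyapM A A N N K (Matrix.of fun i j => F t i j - F t j i) p.1 p.2 = _
    have h1 : (Matrix.of fun i j => F t i j - F t j i) = F t - (F t)ᵀ := by
      ext i j; simp [Matrix.sub_apply, Matrix.transpose_apply]
    rw [h1, lyapM_sub, ← lyapM_transpose A N K hK]
    simp [Matrix.sub_apply, Matrix.transpose_apply]
  have hcont : ContinuousOn f (Set.Icc (0:ℝ) T) := by
    apply continuousOn_pi.2
    intro p
    exact ContinuousOn.sub
      (fun t ht => ((hF t ht p.1 p.2).continuousAt.continuousWithinAt))
      (fun t ht => ((hF t ht p.2 p.1).continuousAt.continuousWithinAt))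
  have heq : Set.EqOn f (fun _ => (0 : E)) (Set.Icc 0 T) := by
    apply ODE_solution_unique (v := fun _ y => ℓ y) hv hcont
    · intro t ht
      have ht' : t ∈ Set.Icc (0:ℝ) T := Set.mem_Icc_of_Ico ht
      have hd := hfd t ht'
      rw [← hveq t ht'] at hd
      exact hd.hasDerivWithinAt
    · exact continuousOn_const
    · intro t _
      simpa using (hasDerivWithinAt_const t _ (0 : E))
    · funext p
      show F 0 p.1 p.2 - F 0 p.2 p.1 = 0
      exact sub_eq_zero_of_eq (hF0.apply p.1 p.2).symm
  intro t ht
  have := heq ht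
  rw [Matrix.IsSymm]
  ext i j
  have h2 : F t i j - F t j i = 0 := by exact congrFun this (i, j)
  rw [Matrix.transpose_apply]
  linarith

/-- Gronwall-type comparison, cf. Lemma 2.3: if `F` solves `F' = 𝓛[F]`
and the symmetric-valued `F_H` satisfies the differential inequality
`F_H' ≤ 𝓛[F_H]` (i.e. `𝓛[F_H(t)] - F_H'(t)` is psd) with `F_H 0 = F 0`, then
`F(t) - F_H(t)` is positive semidefinite on `[0,T]`. -/
theorem stmt_4 {n q : ℕ} (T : ℝ) (hT : 0 < T)
    (A : Matrix (Fin n) (Fin n) ℝ) (N : Fin q → Matrix (Fin n) (Fin n) ℝ)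
    (K : Matrix (Fin q) (Fin q) ℝ) (hK : K.PosSemidef)
    (F FH FH' : ℝ → Matrix (Fin n) (Fin n) ℝ)
    (hF : solvesODE (lyapM A A N N K) F T) (hF0symm : (F 0).IsSymm)
    (hFH0 : FH 0 = F 0)
    (hFHsymm : ∀ t ∈ Set.Icc (0:ℝ) T, (FH t).IsSymm)
    (hFHderiv : ∀ t ∈ Set.Icc (0:ℝ) T, ∀ i j,
      HasDerivAt (fun s => FH s i j) (FH' t i j) t)
    (hineq : ∀ t ∈ Set.Icc (0:ℝ) T, (lyapM A A N N K (FH t) - FH' t).PosSemidef) :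
    ∀ t ∈ Set.Icc (0:ℝ) T, (F t - FH t).PosSemidef := by
  have hKsymm : K.IsSymm := by
    rw [Matrix.IsSymm, ← conjTranspose_eq_transpose_of_trivial]
    exact hK.1
  have hFsymm := solvesODE_symm hT A N K hKsymm F hF hF0symm
  set G : ℝ → Matrix (Fin n) (Fin n) ℝ := fun t => F t - FH t with hG
  set C : ℝ → Matrix (Fin n) (Fin n) ℝ := fun t => lyapM A A N N K (FH t) - FH' t with hCdef
  have hGsymm : ∀ t ∈ Set.Icc (0:ℝ) T, (G t).IsSymm := by
    intro t ht
    show (F t - FH t)ᵀ = F t - FH t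
    rw [Matrix.transpose_sub, hFsymm t ht, hFHsymm t ht]
  have hG0 : G 0 = 0 := by
    show F 0 - FH 0 = 0
    rw [hFH0, sub_self]
  have hGderiv : ∀ t ∈ Set.Icc (0:ℝ) T, ∀ i j,
      HasDerivAt (fun s => G s i j) ((lyapM A A N N K (G t) + C t) i j) t := by
    intro t ht i j
    have h1 : HasDerivAt (fun s => F s i j - FH s i j)
        (lyapM A A N N K (F t) i j - FH' t i j) t := (hF t ht i j).sub (hFHderiv t ht i j)
    have hval : lyapM A A N N K (F t) i j - FH' t i j
        = (lyapM A A N N K (G t) + C t) i j := by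
      show _ = (lyapM A A N N K (F t - FH t) + (lyapM A A N N K (FH t) - FH' t)) i j
      rw [lyapM_sub]
      simp only [Matrix.add_apply, Matrix.sub_apply]
      ring
    have h2 : HasDerivAt (fun s => G s i j)
        (lyapM A A N N K (F t) i j - FH' t i j) t := h1
    rwa [hval] at h2
  have hCpsd : ∀ t ∈ Set.Icc (0:ℝ) T, (C t).PosSemidef := fun t ht => hineq t ht
  intro t ht
  have hGoal : (G t).PosSemidef := by
    refine Matrix.PosSemidef.of_dotProduct_mulVec_nonneg ?_ ?_
    · rw [Matrix.IsHermitian, conjTranspose_eq_transpose_of_trivial]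
      exact hGsymm t ht
    · intro y
      rw [star_pi_real]
      rcases eq_or_ne y 0 with rfl | hy
      · simp
      · have hyy : 0 < y ⬝ᵥ y := by
          obtain ⟨i, hi⟩ := Function.ne_iff.mp hy
          have hii : (0:ℝ) < y i * y i := mul_self_pos.2 (by simpa using hi)
          exact Finset.sum_pos' (fun j _ => mul_self_nonneg _) ⟨i, Finset.mem_univ i, hii⟩
        set r : ℝ := Real.sqrt (y ⬝ᵥ y) with hr
        have hr0 : 0 < r := Real.sqrt_pos.2 hyy
        have hr2 : r * r = y ⬝ᵥ y := Real.mul_self_sqrt hyy.le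
        set z : Fin n → ℝ := r⁻¹ • y with hz
        have hz1 : z ⬝ᵥ z = 1 := by
          rw [hz, smul_dotProduct, dotProduct_smul, smul_eq_mul, smul_eq_mul, ← hr2]
          field_simp
        have hεlim : ∀ ε : ℝ, 0 < ε → 0 < z ⬝ᵥ (G t *ᵥ z) +
            ε * Real.exp ((2 * (∑ i, ∑ j, |A i j|) +
              (∑ i, ∑ j, |(∑ i', ∑ j', K i' j' • (N i' * (N j')ᵀ)) i j|) + 1) * t) :=
          fun ε hε => crossing T hT A N K hK G C hGsymm hG0 hGderiv hCpsd ε hε t ht z hz1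
        set E : ℝ := Real.exp ((2 * (∑ i, ∑ j, |A i j|) +
            (∑ i, ∑ j, |(∑ i', ∑ j', K i' j' • (N i' * (N j')ᵀ)) i j|) + 1) * t) with hE
        have hEpos : 0 < E := Real.exp_pos _
        have hz0 : 0 ≤ z ⬝ᵥ (G t *ᵥ z) := by
          by_contra hneg
          push_neg at hneg
          have h3 := hεlim (-(z ⬝ᵥ (G t *ᵥ z)) / E) (div_pos (by linarith) hEpos)
          rw [div_mul_cancel₀ _ hEpos.ne'] at h3
          linarith
        have hyz : y = r • z := by rw [hz, smul_smul, mul_inv_cancel₀ hr0.ne', one_smul]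
        have hqy : y ⬝ᵥ (G t *ᵥ y) = (r * r) * (z ⬝ᵥ (G t *ᵥ z)) := by
          conv_lhs => rw [hyz]
          rw [smul_dotProduct, mulVec_smul, dotProduct_smul, smul_eq_mul, smul_eq_mul]
          ring
        rw [hqy]
        exact mul_nonneg (mul_self_nonneg r) hz0
  exact hGoal
end

section
/- Assume the reduced matrices have projection form: Â = (WᵀV)⁻¹WᵀAV, N̂_i = (WᵀV)⁻¹WᵀN_iV, X̂₀ = (WᵀV)⁻¹WᵀX₀, Ĉ = CV, where V, W ∈ ℝ^{n×n̂} and WᵀV is invertible, and suppose that V F̂(t) = F̃(t) and W(VᵀW)⁻¹ Ĝ(t) = G̃(t) for every t ∈ [0,T]. Then the four optimality conditions hold exactly: (a) Ĉ P̂(T) = C P̃(T); (b) Q̂(T) X̂₀ = Q̃(T)ᵀ X₀; (c) ∫₀ᵀ Q̂(T−t) F̂(t) dt = ∫₀ᵀ Q̃(T−t)ᵀ F̃(t) dt; (d) for every i = 1,…,q, ∫₀ᵀ Q̂(T−t) (Σ_{j=1}^q N̂_j k_{ij}) F̂(t) dt = ∫₀ᵀ Q̃(T−t)ᵀ (Σ_{j=1}^q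 N_j k_{ij}) F̃(t) dt. -/
open Matrix MeasureTheory Filter
open scoped Kronecker Topology

/-! ### Auxiliary lemmas -/

lemma intM_congr {a b : Type*} {F G : ℝ → Matrix a b ℝ} {T : ℝ}
    (h : ∀ t ∈ Set.uIcc (0:ℝ) T, F t = G t) : intM F T = intM G T := by
  ext i j
  exact intervalIntegral.integral_congr fun t ht => by rw [h t ht]

lemma intM_mul_left {a b c : Type*} [Fintype a]
    (M : Matrix c a ℝ) (F : ℝ → Matrix a b ℝ) (T : ℝ)
    (hF : ∀ i j, IntervalIntegrable (fun t => F t i j) MeasureTheory.volume 0 T) :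
    intM (fun t => M * F t) T = M * intM F T := by
  ext i j
  simp only [intM, Matrix.of_apply, Matrix.mul_apply]
  rw [intervalIntegral.integral_finset_sum (fun k _ => (hF k j).const_mul (M i k))]
  simp [intervalIntegral.integral_const_mul]

lemma solvesODE_contOn {a b : Type*} {L : Matrix a b ℝ → Matrix a b ℝ}
    {F : ℝ → Matrix a b ℝ} {T : ℝ} (h : solvesODE L F T) (i : a) (j : b) :
    ContinuousOn (fun t => F t i j) (Set.Icc 0 T) :=
  fun t ht => (h t ht i j).continuousAt.continuousWithinAt

lemma solvesODE_intInt {a b : Type*} {L : Matrix a b ℝ → Matrix a b ℝ}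
    {F : ℝ → Matrix a b ℝ} {T : ℝ} (h : solvesODE L F T) {c : ℝ}
    (hc : c ∈ Set.Icc (0:ℝ) T) (i : a) (j : b) :
    IntervalIntegrable (fun t => F t i j) MeasureTheory.volume 0 c := by
  apply ContinuousOn.intervalIntegrable
  rw [Set.uIcc_of_le hc.1]
  exact (solvesODE_contOn h i j).mono (Set.Icc_subset_Icc_right hc.2)

lemma lyapAdjM_sub {a : Type*} [Fintype a] {q : ℕ} (A : Matrix a a ℝ)
    (N : Fin q → Matrix a a ℝ) (K : Matrix (Fin q) (Fin q) ℝ) (X Y : Matrix a a ℝ) :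
    lyapAdjM A A N N K (X - Y) = lyapAdjM A A N N K X - lyapAdjM A A N N K Y := by
  simp only [lyapAdjM, Matrix.mul_sub, Matrix.sub_mul, smul_sub, Finset.sum_sub_distrib]
  abel

lemma lyapAdjM_add {a : Type*} [Fintype a] {q : ℕ} (A : Matrix a a ℝ)
    (N : Fin q → Matrix a a ℝ) (K : Matrix (Fin q) (Fin q) ℝ) (X Y : Matrix a a ℝ) :
    lyapAdjM A A N N K (X + Y) = lyapAdjM A A N N K X + lyapAdjM A A N N K Y := by
  simp only [lyapAdjM, Matrix.mul_add, Matrix.add_mul, smul_add, Finset.sum_add_distrib]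
  abel

lemma lyapAdjM_smul {a : Type*} [Fintype a] {q : ℕ} (A : Matrix a a ℝ)
    (N : Fin q → Matrix a a ℝ) (K : Matrix (Fin q) (Fin q) ℝ) (c : ℝ) (X : Matrix a a ℝ) :
    lyapAdjM A A N N K (c • X) = c • lyapAdjM A A N N K X := by
  simp only [lyapAdjM, Matrix.mul_smul, Matrix.smul_mul, smul_add, Finset.smul_sum]
  congr 1
  refine Finset.sum_congr rfl fun i _ => Finset.sum_congr rfl fun j _ => ?_
  rw [smul_comm]

lemma lyapAdjM_transpose {a : Type*} [Fintype a] {q : ℕ} (A : Matrix a a ℝ)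
    (N : Fin q → Matrix a a ℝ) {K : Matrix (Fin q) (Fin q) ℝ} (hK : K.IsSymm)
    (X : Matrix a a ℝ) :
    lyapAdjM A A N N K Xᵀ = (lyapAdjM A A N N K X)ᵀ := by
  simp only [lyapAdjM, Matrix.transpose_add, Matrix.transpose_mul, Matrix.transpose_sum,
    Matrix.transpose_smul, Matrix.transpose_transpose, Matrix.mul_assoc]
  rw [add_comm (Aᵀ * Xᵀ) (Xᵀ * A)]
  congr 1
  rw [Finset.sum_comm]
  exact Finset.sum_congr rfl fun j _ => Finset.sum_congr rfl fun i _ => by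
    rw [hK.apply]

/-- Lemma 3.2, exact version: projection-form reduced matrices with
`V F̂ = F̃` and `W (VᵀW)⁻¹ Ĝ = G̃` pointwise on `[0,T]` satisfy the optimality
conditions (a)–(d) of Theorem 3.1 exactly. -/
theorem stmt_7 {n nh m p q : ℕ} (T : ℝ) (hT : 0 < T)
    (A : Matrix (Fin n) (Fin n) ℝ) (N : Fin q → Matrix (Fin n) (Fin n) ℝ)
    (K : Matrix (Fin q) (Fin q) ℝ) (hK : K.IsSymm)
    (X₀ : Matrix (Fin n) (Fin m) ℝ) (C : Matrix (Fin p) (Fin n) ℝ)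
    (V W : Matrix (Fin n) (Fin nh) ℝ) (hWV : IsUnit (Wᵀ * V))
    (Ahat : Matrix (Fin nh) (Fin nh) ℝ) (Nhat : Fin q → Matrix (Fin nh) (Fin nh) ℝ)
    (X0hat : Matrix (Fin nh) (Fin m) ℝ) (Chat : Matrix (Fin p) (Fin nh) ℝ)
    (hAhat : Ahat = (Wᵀ * V)⁻¹ * Wᵀ * A * V)
    (hNhat : ∀ i, Nhat i = (Wᵀ * V)⁻¹ * Wᵀ * N i * V)
    (hX0hat : X0hat = (Wᵀ * V)⁻¹ * Wᵀ * X₀)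
    (hChat : Chat = C * V)
    (Fhat : ℝ → Matrix (Fin nh) (Fin nh) ℝ)
    (hFhat : solvesODE (lyapM Ahat Ahat Nhat Nhat K) Fhat T)
    (hFhat0 : Fhat 0 = X0hat * X0hatᵀ)
    (Ftil : ℝ → Matrix (Fin n) (Fin nh) ℝ)
    (hFtil : solvesODE (lyapM A Ahat N Nhat K) Ftil T)
    (hFtil0 : Ftil 0 = X₀ * X0hatᵀ)
    (Ghat : ℝ → Matrix (Fin nh) (Fin nh) ℝ)
    (hGhat : solvesODE (lyapAdjM Ahat Ahat Nhat Nhat K) Ghat T)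
    (hGhat0 : Ghat 0 = Chatᵀ * Chat)
    (Gtil : ℝ → Matrix (Fin n) (Fin nh) ℝ)
    (hGtil : solvesODE (lyapAdjM A Ahat N Nhat K) Gtil T)
    (hGtil0 : Gtil 0 = Cᵀ * Chat)
    (hVF : ∀ t ∈ Set.Icc (0:ℝ) T, V * Fhat t = Ftil t)
    (hWG : ∀ t ∈ Set.Icc (0:ℝ) T, W * (Vᵀ * W)⁻¹ * Ghat t = Gtil t) :
    Chat * intM Fhat T = C * intM Ftil T
    ∧ intM Ghat T * X0hat = (intM Gtil T)ᵀ * X₀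
    ∧ intM (fun t => intM Ghat (T - t) * Fhat t) T =
        intM (fun t => (intM Gtil (T - t))ᵀ * Ftil t) T
    ∧ ∀ i : Fin q,
        intM (fun t => intM Ghat (T - t) * (∑ j, K i j • Nhat j) * Fhat t) T =
          intM (fun t => (intM Gtil (T - t))ᵀ * (∑ j, K i j • N j) * Ftil t) T := by
  have hT0 : (0:ℝ) ≤ T := hT.le
  have hTmem : T ∈ Set.Icc (0:ℝ) T := ⟨hT0, le_rfl⟩
  have hdet : IsUnit (Wᵀ * V).det := (Matrix.isUnit_iff_isUnit_det _).mp hWV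
  have hinv : (Wᵀ * V)⁻¹ * (Wᵀ * V) = 1 := Matrix.nonsing_inv_mul _ hdet
  set Pt : Matrix (Fin nh) (Fin n) ℝ := (Wᵀ * V)⁻¹ * Wᵀ with hPtdef
  have hPtV : Pt * V = 1 := by rw [hPtdef, Matrix.mul_assoc]; exact hinv
  have hPtN : ∀ j, Pt * N j * V = Nhat j := fun j => (hNhat j).symm
  have hPtX : Pt * X₀ = X0hat := hX0hat.symm
  -- Symmetry of Ghat on [0,T]
  have hGsym : ∀ t ∈ Set.Icc (0:ℝ) T, ∀ i j, Ghat t j i = Ghat t i j := by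
    let fop : ((Fin nh × Fin nh) → ℝ) → ((Fin nh × Fin nh) → ℝ) :=
      fun x p => lyapAdjM Ahat Ahat Nhat Nhat K (Matrix.of fun i j => x (i, j)) p.1 p.2
    have hlin : IsLinearMap ℝ fop := by
      constructor
      · intro x y
        funext pr
        have hof : (Matrix.of fun i j => (x + y) (i, j)) =
            (Matrix.of fun i j => x (i, j)) + (Matrix.of fun i j => y (i, j)) := rfl
        show lyapAdjM Ahat Ahat Nhat Nhat K
            (Matrix.of fun i j => (x + y) (i, j)) pr.1 pr.2 = _
        rw [hof, lyapAdjM_add]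
        rfl
      · intro c x
        funext pr
        have hof : (Matrix.of fun i j => (c • x) (i, j)) =
            c • (Matrix.of fun i j => x (i, j)) := rfl
        show lyapAdjM Ahat Ahat Nhat Nhat K
            (Matrix.of fun i j => (c • x) (i, j)) pr.1 pr.2 = _
        rw [hof, lyapAdjM_smul]
        rfl
    let CLM := LinearMap.toContinuousLinearMap (IsLinearMap.mk' fop hlin)
    have hlip : LipschitzWith ‖CLM‖₊ fop := CLM.lipschitz
    let g : ℝ → ((Fin nh × Fin nh) → ℝ) :=
      fun t p => Ghat t p.1 p.2 - Ghat t p.2 p.1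
    have hg' : ∀ t ∈ Set.Icc (0:ℝ) T, HasDerivAt g (fop (g t)) t := by
      intro t ht
      rw [hasDerivAt_pi]
      intro pr
      have h1 := (hGhat t ht pr.1 pr.2).sub (hGhat t ht pr.2 pr.1)
      convert h1 using 1
      show lyapAdjM Ahat Ahat Nhat Nhat K
          (Matrix.of fun i j => Ghat t i j - Ghat t j i) pr.1 pr.2 = _
      have hof : (Matrix.of fun i j => Ghat t i j - Ghat t j i) =
          Ghat t - (Ghat t)ᵀ := rfl
      rw [hof, lyapAdjM_sub, lyapAdjM_transpose Ahat Nhat hK]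
      simp [Matrix.sub_apply, Matrix.transpose_apply]
      rfl
    have hkey : Set.EqOn g (fun _ => (0 : (Fin nh × Fin nh) → ℝ)) (Set.Icc 0 T) := by
      apply ODE_solution_unique (v := fun _ x => fop x) (fun _ => hlip)
      · exact fun t ht => (hg' t ht).continuousAt.continuousWithinAt
      · exact fun t ht => (hg' t (Set.Ico_subset_Icc_self ht)).hasDerivWithinAt
      · exact continuousOn_const
      · intro t ht
        have h0 : fop 0 = 0 := (IsLinearMap.mk' fop hlin).map_zero
        rw [h0]
        exact (hasDerivAt_const t _).hasDerivWithinAt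
      · funext pr
        simp only [g, hGhat0, Matrix.mul_apply, Matrix.transpose_apply, Pi.zero_apply]
        rw [Finset.sum_congr rfl fun k _ => mul_comm (Chat k pr.2) (Chat k pr.1)]
        ring
    intro t ht i j
    have h2 : Ghat t i j - Ghat t j i = 0 := congrFun (hkey ht) (i, j)
    exact (sub_eq_zero.mp h2).symm
  -- Integrability of entries
  have hFint : ∀ i j, IntervalIntegrable (fun t => Fhat t i j) MeasureTheory.volume 0 T :=
    solvesODE_intInt hFhat hTmem
  have hGintc : ∀ c ∈ Set.Icc (0:ℝ) T, ∀ i j,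
      IntervalIntegrable (fun t => Ghat t i j) MeasureTheory.volume 0 c :=
    fun c hc i j => solvesODE_intInt hGhat hc i j
  -- symmetry of the integral of Ghat
  have hQsym : ∀ c ∈ Set.Icc (0:ℝ) T, (intM Ghat c)ᵀ = intM Ghat c := by
    intro c hc
    ext i j
    simp only [Matrix.transpose_apply, intM, Matrix.of_apply]
    apply intervalIntegral.integral_congr
    intro t ht
    rw [Set.uIcc_of_le hc.1] at ht
    exact hGsym t ⟨ht.1, ht.2.trans hc.2⟩ i j
  -- F̃ relation
  have hFtilEq : intM Ftil T = V * intM Fhat T := by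
    rw [← intM_mul_left V Fhat T hFint]
    apply intM_congr
    intro t ht
    rw [Set.uIcc_of_le hT0] at ht
    exact (hVF t ht).symm
  -- Q̃ relation, for every c ∈ [0,T]
  have hGtilEq : ∀ c ∈ Set.Icc (0:ℝ) T, (intM Gtil c)ᵀ = intM Ghat c * Pt := by
    intro c hc
    have h1 : intM Gtil c = (W * (Vᵀ * W)⁻¹) * intM Ghat c := by
      rw [← intM_mul_left (W * (Vᵀ * W)⁻¹) Ghat c (hGintc c hc)]
      apply intM_congr
      intro t ht
      rw [Set.uIcc_of_le hc.1] at ht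
      exact (hWG t ⟨ht.1, ht.2.trans hc.2⟩).symm
    rw [h1, Matrix.transpose_mul, hQsym c hc, Matrix.transpose_mul,
      Matrix.transpose_nonsing_inv, Matrix.transpose_mul, Matrix.transpose_transpose]
  refine ⟨?_, ?_, ?_, ?_⟩
  · -- (a)
    rw [hChat, hFtilEq, Matrix.mul_assoc]
  · -- (b)
    rw [hGtilEq T hTmem, Matrix.mul_assoc, hPtX]
  · -- (c)
    apply intM_congr
    intro t ht
    rw [Set.uIcc_of_le hT0] at ht
    have hc : T - t ∈ Set.Icc (0:ℝ) T := ⟨by linarith [ht.2], by linarith [ht.1]⟩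
    rw [hGtilEq _ hc, ← hVF t ht]
    calc intM Ghat (T - t) * Fhat t
        = intM Ghat (T - t) * (Pt * V) * Fhat t := by rw [hPtV, Matrix.mul_one]
      _ = intM Ghat (T - t) * Pt * (V * Fhat t) := by simp only [Matrix.mul_assoc]
  · -- (d)
    intro i
    apply intM_congr
    intro t ht
    rw [Set.uIcc_of_le hT0] at ht
    have hc : T - t ∈ Set.Icc (0:ℝ) T := ⟨by linarith [ht.2], by linarith [ht.1]⟩
    have hmid : Pt * (∑ j, K i j • N j) * V = ∑ j, K i j • Nhat j := by
      rw [Matrix.mul_sum, Matrix.sum_mul]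
      refine Finset.sum_congr rfl fun j _ => ?_
      rw [Matrix.mul_smul, Matrix.smul_mul, hPtN j]
    rw [hGtilEq _ hc, ← hVF t ht, ← hmid]
    simp only [Matrix.mul_assoc]
end
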